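/- Let ∑ x_n be a conditionally convergent series in ℝ² such that every open half-circle of the unit circle contains at least one Levy vector of the series. Then A_abs(x_n) = ℝ², i.e., for every a ∈ ℝ² there is a subset E ⊆ ℕ with ∑_{n∈E} ‖x_n‖ < ∞ and ∑_{n∈E} x_n = a. -/

import Mathlib

open Filter Topology

/-- Euclidean norm on the plane `ℝ × ℝ`. -/
noncomputable def enorm2 (v : ℝ × ℝ) : ℝ := Real.sqrt (v.1 ^ 2 + v.2 ^ 2)

/-- Euclidean inner product on the plane. -/
def dot2 (u v : ℝ × ℝ) : ℝ := u.1 * v.1 + u.2 * v.2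

/-- `u` is a Levy vector of the series `∑ x n`: `u` is a unit vector and for every `ε > 0`
the sum of norms of the terms lying in the cone `S_ε(u)` diverges. -/
noncomputable def IsLevy (x : ℕ → ℝ × ℝ) (u : ℝ × ℝ) : Prop :=
  enorm2 u = 1 ∧ ∀ ε : ℝ, 0 < ε → ¬ Summable (fun n =>
    if (1 - ε) * enorm2 u * enorm2 (x n) ≤ dot2 u (x n) then enorm2 (x n) else 0)

/-- The series `∑ x n` converges (in the given order) to `s`. -/
def ConvergesTo (x : ℕ → ℝ × ℝ) (s : ℝ × ℝ) : Prop :=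
  Tendsto (fun N => ∑ n ∈ Finset.range N, x n) atTop (𝓝 s)

/-- The series `∑ x n` is conditionally convergent. -/
noncomputable def CondConv (x : ℕ → ℝ × ℝ) : Prop :=
  (∃ s, ConvergesTo x s) ∧ ¬ Summable (fun n => enorm2 (x n))

/-- `s` belongs to the achievement set `A(x)`. -/
def Achieves (x : ℕ → ℝ × ℝ) (s : ℝ × ℝ) : Prop :=
  ∃ E : Set ℕ, ConvergesTo (Set.indicator E x) s

/-- `s` belongs to the absolute achievement set `A_abs(x)`. -/
noncomputable def AchievesAbs (x : ℕ → ℝ × ℝ) (s : ℝ × ℝ) : Prop :=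
  ∃ E : Set ℕ, Summable (fun n => enorm2 (Set.indicator E x n)) ∧
    HasSum (Set.indicator E x) s

/-- The reduction property of a series `∑ (x n, y n)`. -/
noncomputable def ReductionProperty (x y : ℕ → ℝ) : Prop :=
  Tendsto (fun n => |y n| / |x n|) atTop atTop ∧
  ∀ ε : ℝ, 0 < ε → ∀ t ∈ Set.Ioo (-ε) ε, ∀ N : ℕ,
    ∃ m : ℕ, ∃ k : ℕ → ℕ, 0 < m ∧ StrictMono k ∧ N ≤ k 0 ∧
      |(∑ i ∈ Finset.range m, x (k i)) - t| < ε / 2 ∧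
      ∀ j : ℕ, 1 ≤ j → j ≤ m →
        |∑ i ∈ Finset.range j, x (k i)| < ε ∧ |∑ i ∈ Finset.range j, y (k i)| < ε

lemma enorm2_nonneg (v : ℝ × ℝ) : 0 ≤ enorm2 v := Real.sqrt_nonneg _

lemma enorm2_sq (v : ℝ × ℝ) : enorm2 v ^ 2 = v.1 ^ 2 + v.2 ^ 2 := by
  have : (0:ℝ) ≤ v.1 ^ 2 + v.2 ^ 2 := by positivity
  simp [enorm2, Real.sq_sqrt this]

lemma enorm2_zero : enorm2 (0 : ℝ × ℝ) = 0 := by simp [enorm2]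

lemma sq_le_imp_le {a b : ℝ} (h : a ^ 2 ≤ b ^ 2) (ha : 0 ≤ a) (hb : 0 ≤ b) : a ≤ b := by
  nlinarith

lemma dot2_le (u v : ℝ × ℝ) : dot2 u v ≤ enorm2 u * enorm2 v := by
  have h1 := enorm2_sq u
  have h2 := enorm2_sq v
  have hprod : (enorm2 u * enorm2 v) ^ 2 = (u.1 ^ 2 + u.2 ^ 2) * (v.1 ^ 2 + v.2 ^ 2) := by
    rw [mul_pow, h1, h2]
  show u.1 * v.1 + u.2 * v.2 ≤ enorm2 u * enorm2 v
  nlinarith [hprod, sq_nonneg (u.1 * v.2 - u.2 * v.1),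
    mul_nonneg (enorm2_nonneg u) (enorm2_nonneg v), sq_nonneg (u.1 * v.1 + u.2 * v.2)]

lemma enorm2_add_le (a b : ℝ × ℝ) : enorm2 (a + b) ≤ enorm2 a + enorm2 b := by
  have h : enorm2 (a+b) ^ 2 ≤ (enorm2 a + enorm2 b) ^ 2 := by
    have h1 := enorm2_sq a
    have h2 := enorm2_sq b
    have h3 := enorm2_sq (a+b)
    have h4 := dot2_le a b
    simp only [Prod.fst_add, Prod.snd_add] at h3
    simp only [dot2] at h4
    nlinarith [mul_nonneg (enorm2_nonneg a) (enorm2_nonneg b)]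
  exact sq_le_imp_le h (enorm2_nonneg _) (by have := enorm2_nonneg a; have := enorm2_nonneg b; linarith)

lemma enorm2_sum_le (s : Finset ℕ) (g : ℕ → ℝ × ℝ) :
    enorm2 (∑ n ∈ s, g n) ≤ ∑ n ∈ s, enorm2 (g n) := by
  classical
  induction s using Finset.induction with
  | empty => simp [enorm2_zero]
  | @insert a s ha ih =>
    rw [Finset.sum_insert ha, Finset.sum_insert ha]
    exact le_trans (enorm2_add_le _ _) (by linarith)

lemma dot2_sum (r : ℝ × ℝ) (s : Finset ℕ) (g : ℕ → ℝ × ℝ) :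
    dot2 r (∑ n ∈ s, g n) = ∑ n ∈ s, dot2 r (g n) := by
  classical
  induction s using Finset.induction with
  | empty => simp [dot2]
  | @insert a s ha ih =>
    rw [Finset.sum_insert ha, Finset.sum_insert ha, ← ih]
    simp [dot2]; ring

lemma norm_le_enorm2 (v : ℝ × ℝ) : ‖v‖ ≤ enorm2 v := by
  rw [Prod.norm_def]
  have h1 : |v.1| ≤ enorm2 v := by
    rw [← Real.sqrt_sq_eq_abs]
    exact Real.sqrt_le_sqrt (by nlinarith [sq_nonneg v.2])
  have h2 : |v.2| ≤ enorm2 v := by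
    rw [← Real.sqrt_sq_eq_abs]
    exact Real.sqrt_le_sqrt (by nlinarith [sq_nonneg v.1])
  simp only [Real.norm_eq_abs]
  exact max_le h1 h2

lemma continuous_enorm2 : Continuous enorm2 := by
  unfold enorm2; fun_prop

lemma enorm2_sub_sq (r v : ℝ × ℝ) :
    enorm2 (r - v) ^ 2 = enorm2 r ^ 2 - 2 * dot2 r v + enorm2 v ^ 2 := by
  rw [enorm2_sq, enorm2_sq, enorm2_sq]
  simp only [dot2, Prod.fst_sub, Prod.snd_sub]; ring

lemma abs_le_of_sq_le' {a c : ℝ} (h : a ^ 2 ≤ c ^ 2) (hc : 0 ≤ c) : |a| ≤ c := by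
  rw [← Real.sqrt_sq_eq_abs, ← Real.sqrt_sq hc]; exact Real.sqrt_le_sqrt h

lemma chunk_exists (f : ℕ → ℝ) (hnn : ∀ n, 0 ≤ f n) (hns : ¬ Summable f)
    (h0 : Tendsto f atTop (𝓝 0)) {L η : ℝ} (hL : 0 < L) (hη : 0 < η) (N : ℕ) :
    ∃ N' M : ℕ, N ≤ N' ∧
      L ≤ ∑ n ∈ Finset.Ico N' M, f n ∧ ∑ n ∈ Finset.Ico N' M, f n ≤ L + η := by
  obtain ⟨N0, hN0⟩ := (h0.eventually (gt_mem_nhds hη)).exists_forall_of_atTop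
  set N' := max N N0 with hN'def
  have hN'η : ∀ n, N' ≤ n → f n ≤ η := fun n hn => le_of_lt (hN0 n (le_trans (le_max_right _ _) hn))
  have hub : ∀ c : ℝ, ∃ M, c < ∑ n ∈ Finset.range M, f n := by
    intro c
    by_contra hc
    push_neg at hc
    exact hns (summable_of_sum_range_le hnn hc)
  obtain ⟨M0, hM0⟩ := hub (L + ∑ n ∈ Finset.range N', f n)
  have hM0N' : N' ≤ M0 := by
    by_contra h
    push_neg at h
    have : ∑ n ∈ Finset.range M0, f n ≤ ∑ n ∈ Finset.range N', f n :=
      Finset.sum_le_sum_of_subset_of_nonneg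
        (Finset.range_subset_range.2 h.le) (fun i _ _ => hnn i)
    linarith
  have hsplit : ∀ M, N' ≤ M → ∑ n ∈ Finset.range M, f n
      = ∑ n ∈ Finset.range N', f n + ∑ n ∈ Finset.Ico N' M, f n := by
    intro M hM
    rw [Finset.range_eq_Ico, Finset.range_eq_Ico]
    exact (Finset.sum_Ico_consecutive f (Nat.zero_le N') hM).symm
  have hP : ∃ M, L ≤ ∑ n ∈ Finset.Ico N' M, f n := by
    refine ⟨M0, ?_⟩
    have := hsplit M0 hM0N'
    linarith
  classical
  set M := Nat.find hP with hMdef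
  have hMspec : L ≤ ∑ n ∈ Finset.Ico N' M, f n := Nat.find_spec hP
  have hMmin : ∀ m, m < M → ∑ n ∈ Finset.Ico N' m, f n < L := by
    intro m hm
    have := Nat.find_min hP hm
    push_neg at this
    exact this
  clear_value M
  refine ⟨N', M, le_max_left _ _, hMspec, ?_⟩
  rcases Nat.eq_zero_or_pos M with h0' | h0'
  · rw [h0'] at hMspec; simp at hMspec; linarith
  obtain ⟨M', rfl⟩ : ∃ M', M = M' + 1 := ⟨M - 1, by omega⟩
  have hN'M' : N' ≤ M' := by
    by_contra h
    push_neg at h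
    have : Finset.Ico N' (M' + 1) = ∅ := Finset.Ico_eq_empty (by omega)
    rw [this] at hMspec; simp at hMspec; linarith
  rw [Finset.sum_Ico_succ_top hN'M'] at hMspec ⊢
  have h1 := hMmin M' (Nat.lt_succ_self _)
  have h2 := hN'η M' hN'M'
  linarith

set_option maxHeartbeats 1000000 in
lemma angle_bound (u r q : ℝ × ℝ) (hu : enorm2 u = 1) {δ : ℝ} (hδ0 : 0 < δ) (hδ1 : δ ≤ 1)
    (hr : δ * enorm2 r ≤ dot2 r u) (hq : (1 - δ ^ 2 / 32) * enorm2 q ≤ dot2 u q) :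
    δ / 2 * (enorm2 r * enorm2 q) ≤ dot2 r q := by
  have hu2 : u.1 ^ 2 + u.2 ^ 2 = 1 := by
    have h := enorm2_sq u; rw [hu] at h; linarith
  have hR : 0 ≤ enorm2 r := enorm2_nonneg r
  have hQ : 0 ≤ enorm2 q := enorm2_nonneg q
  have hkey : dot2 r q = dot2 u r * dot2 u q
      + (u.1 * r.2 - u.2 * r.1) * (u.1 * q.2 - u.2 * q.1) := by
    simp only [dot2]
    linear_combination (-(r.1 * q.1 + r.2 * q.2)) * hu2
  have hur : dot2 u r = dot2 r u := by simp only [dot2]; ring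
  have hcr2 : (u.1 * r.2 - u.2 * r.1) ^ 2 + (dot2 u r) ^ 2 = enorm2 r ^ 2 := by
    rw [enorm2_sq]; simp only [dot2]; linear_combination (r.1 ^ 2 + r.2 ^ 2) * hu2
  have hcq2 : (u.1 * q.2 - u.2 * q.1) ^ 2 + (dot2 u q) ^ 2 = enorm2 q ^ 2 := by
    rw [enorm2_sq]; simp only [dot2]; linear_combination (q.1 ^ 2 + q.2 ^ 2) * hu2
  have hε1 : (1 : ℝ) - δ ^ 2 / 32 ≥ 1 / 2 := by nlinarith
  have hdq0 : 0 ≤ dot2 u q := le_trans (by nlinarith) hq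
  have h2 : ((1 - δ ^ 2 / 32) * enorm2 q) ^ 2 ≤ dot2 u q ^ 2 := by
    have h1 : 0 ≤ (1 - δ ^ 2 / 32) * enorm2 q := mul_nonneg (by linarith) hQ
    nlinarith
  have hcq : (u.1 * q.2 - u.2 * q.1) ^ 2 ≤ (δ / 4 * enorm2 q) ^ 2 := by
    nlinarith [sq_nonneg (δ ^ 2 / 32 * enorm2 q)]
  have hcr : (u.1 * r.2 - u.2 * r.1) ^ 2 ≤ enorm2 r ^ 2 := by nlinarith [sq_nonneg (dot2 u r)]
  have habs : -(enorm2 r * (δ / 4 * enorm2 q)) ≤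
      (u.1 * r.2 - u.2 * r.1) * (u.1 * q.2 - u.2 * q.1) := by
    have ha := abs_le_of_sq_le' hcr hR
    have hb := abs_le_of_sq_le' hcq (by positivity)
    calc -(enorm2 r * (δ / 4 * enorm2 q))
        ≤ -(|u.1 * r.2 - u.2 * r.1| * |u.1 * q.2 - u.2 * q.1|) := by
          apply neg_le_neg
          exact mul_le_mul ha hb (abs_nonneg _) hR
      _ ≤ (u.1 * r.2 - u.2 * r.1) * (u.1 * q.2 - u.2 * q.1) := by
          rw [← abs_mul]; exact neg_abs_le _
  have hmain : (δ * enorm2 r) * ((1 - δ ^ 2 / 32) * enorm2 q) ≤ dot2 u r * dot2 u q := by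
    rw [hur]
    have h1 : 0 ≤ δ * enorm2 r := mul_nonneg hδ0.le hR
    have h2' : 0 ≤ (1 - δ ^ 2 / 32) * enorm2 q := mul_nonneg (by linarith) hQ
    exact mul_le_mul hr hq h2' (le_trans h1 hr)
  have hfac : 0 ≤ δ * (enorm2 r * enorm2 q) * (1 / 4 - δ ^ 2 / 32) :=
    mul_nonneg (mul_nonneg hδ0.le (mul_nonneg hR hQ)) (by nlinarith)
  rw [hkey]
  nlinarith [hmain, habs, hfac]

lemma enorm2_pos {v : ℝ × ℝ} (h : v ≠ 0) : 0 < enorm2 v := by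
  rcases (enorm2_nonneg v).lt_or_eq with h' | h'
  · exact h'
  · exfalso
    apply h
    have hs := enorm2_sq v
    rw [← h'] at hs
    have h1 : v.1 = 0 := by nlinarith [sq_nonneg v.1, sq_nonneg v.2]
    have h2 : v.2 = 0 := by nlinarith [sq_nonneg v.1, sq_nonneg v.2]
    exact Prod.ext h1 h2

lemma levy_net (x : ℕ → ℝ × ℝ)
    (hhalf : ∀ w : ℝ × ℝ, w ≠ 0 → ∃ u : ℝ × ℝ, IsLevy x u ∧ 0 < dot2 w u) :
    ∃ δ : ℝ, 0 < δ ∧ δ ≤ 1 ∧ ∀ w : ℝ × ℝ, ∃ u, IsLevy x u ∧ δ * enorm2 w ≤ dot2 w u := by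
  classical
  set K : Set (ℝ × ℝ) := {w | enorm2 w = 1} with hK
  have hKcl : IsClosed K := isClosed_eq continuous_enorm2 continuous_const
  have hKbd : Bornology.IsBounded K := by
    apply (Metric.isBounded_closedBall (x := (0:ℝ×ℝ)) (r := 1)).subset
    intro w hw
    rw [Metric.mem_closedBall, dist_zero_right]
    calc ‖w‖ ≤ enorm2 w := norm_le_enorm2 w
    _ = 1 := hw
  have hKcpt : IsCompact K := Metric.isCompact_of_isClosed_isBounded hKcl hKbd
  have hne0 : ∀ w ∈ K, w ≠ (0:ℝ×ℝ) := by
    intro w hw h0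
    rw [h0] at hw
    simp only [hK, Set.mem_setOf_eq, enorm2_zero] at hw
    norm_num at hw
  have hsel : ∀ p : K, ∃ u, IsLevy x u ∧ 0 < dot2 (p:ℝ×ℝ) u := fun p => hhalf p (hne0 p p.2)
  choose uu huL hud using hsel
  set U : K → Set (ℝ×ℝ) := fun p => {w' | dot2 (p:ℝ×ℝ) (uu p) / 2 < dot2 w' (uu p)} with hU
  have hUopen : ∀ p, IsOpen (U p) := by
    intro p
    have hcont : Continuous fun w' : ℝ×ℝ => dot2 w' (uu p) := by
      simp only [dot2]; fun_prop
    exact isOpen_lt continuous_const hcont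
  have hcov : K ⊆ ⋃ p : K, U p := by
    intro w hw
    exact Set.mem_iUnion.2 ⟨⟨w, hw⟩, by simpa [hU] using half_lt_self (hud ⟨w, hw⟩)⟩
  obtain ⟨t, ht⟩ := hKcpt.elim_finite_subcover U hUopen hcov
  have h10 : ((1:ℝ),(0:ℝ)) ∈ K := by
    simp [hK, enorm2]
  have htne : t.Nonempty := by
    obtain ⟨p, hp, _⟩ := Set.mem_iUnion₂.1 (ht h10)
    exact ⟨p, hp⟩
  set δ0 : ℝ := t.inf' htne fun p => dot2 (p:ℝ×ℝ) (uu p) / 2 with hδ0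
  have hδ0pos : 0 < δ0 := by
    rw [hδ0, Finset.lt_inf'_iff]
    exact fun p _ => half_pos (hud p)
  refine ⟨min δ0 1, lt_min hδ0pos one_pos, min_le_right _ _, ?_⟩
  intro w
  by_cases hw0 : w = 0
  · obtain ⟨p, _⟩ := htne
    refine ⟨uu p, huL p, ?_⟩
    simp [hw0, enorm2_zero, dot2]
  · have hc : 0 < enorm2 w := enorm2_pos hw0
    set w' : ℝ×ℝ := (w.1 / enorm2 w, w.2 / enorm2 w) with hw'
    have hw'K : w' ∈ K := by
      show enorm2 w' = 1
      have h := enorm2_sq w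
      have hsq : enorm2 w' ^ 2 = 1 := by
        rw [enorm2_sq]
        simp only [hw']
        field_simp
        linarith
      have hfac : (enorm2 w' - 1) * (enorm2 w' + 1) = 0 := by linear_combination hsq
      rcases mul_eq_zero.1 hfac with h' | h'
      · linarith
      · linarith [enorm2_nonneg w']
    obtain ⟨p, hpt, hpU⟩ := Set.mem_iUnion₂.1 (ht hw'K)
    refine ⟨uu p, huL p, ?_⟩
    have h1 : δ0 ≤ dot2 (p:ℝ×ℝ) (uu p) / 2 := Finset.inf'_le _ hpt
    have h2 : dot2 (p:ℝ×ℝ) (uu p) / 2 < dot2 w' (uu p) := hpU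
    have h3 : dot2 w' (uu p) * enorm2 w = dot2 w (uu p) := by
      simp only [dot2, hw']
      field_simp
    calc min δ0 1 * enorm2 w ≤ δ0 * enorm2 w := by
          apply mul_le_mul_of_nonneg_right (min_le_left _ _) hc.le
      _ ≤ dot2 w' (uu p) * enorm2 w := by nlinarith
      _ = dot2 w (uu p) := h3

lemma step_lemma (x : ℕ → ℝ × ℝ)
    (hx0 : Tendsto (fun n => enorm2 (x n)) atTop (𝓝 0))
    {δ : ℝ} (hδ0 : 0 < δ) (hδ1 : δ ≤ 1)
    (hnet : ∀ w : ℝ × ℝ, ∃ u, IsLevy x u ∧ δ * enorm2 w ≤ dot2 w u) :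
    ∀ (N : ℕ) (r : ℝ × ℝ), ∃ F : Finset ℕ, (∀ n ∈ F, N ≤ n) ∧
      (∑ n ∈ F, enorm2 (x n)) ≤ enorm2 r ∧
      enorm2 (r - ∑ n ∈ F, x n) ^ 2 ≤ (1 - δ ^ 2 / 8) * enorm2 r ^ 2 := by
  classical
  intro N r
  by_cases hr0 : r = 0
  · refine ⟨∅, by simp, by simp [enorm2_nonneg], ?_⟩
    simp [hr0, enorm2_zero]
  have hrpos : 0 < enorm2 r := enorm2_pos hr0
  obtain ⟨u, hLevy, hdot⟩ := hnet r
  have hu1 : enorm2 u = 1 := hLevy.1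
  set ε : ℝ := δ ^ 2 / 32 with hε
  have hεpos : 0 < ε := by positivity
  set f : ℕ → ℝ := fun n =>
    if (1 - ε) * enorm2 u * enorm2 (x n) ≤ dot2 u (x n) then enorm2 (x n) else 0 with hf
  have hns : ¬ Summable f := hLevy.2 ε hεpos
  have hnn : ∀ n, 0 ≤ f n := by
    intro n
    simp only [hf]
    split
    · exact enorm2_nonneg _
    · exact le_refl 0
  have hfle : ∀ n, f n ≤ enorm2 (x n) := by
    intro n
    simp only [hf]
    split
    · exact le_refl _
    · exact enorm2_nonneg _
  have hf0 : Tendsto f atTop (𝓝 0) := squeeze_zero hnn hfle hx0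
  have hLpos : 0 < δ * enorm2 r / 4 := by positivity
  obtain ⟨N', M, hNN', hL1, hL2⟩ := chunk_exists f hnn hns hf0 hLpos hLpos N
  set F : Finset ℕ := (Finset.Ico N' M).filter
    (fun n => (1 - ε) * enorm2 u * enorm2 (x n) ≤ dot2 u (x n)) with hF
  have hFsum : ∑ n ∈ F, enorm2 (x n) = ∑ n ∈ Finset.Ico N' M, f n := by
    rw [hF, Finset.sum_filter]
  set Sv : ℝ := ∑ n ∈ F, enorm2 (x n) with hSv
  have hSvL : δ * enorm2 r / 4 ≤ Sv := by rw [hFsum]; exact hL1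
  have hSvU : Sv ≤ δ * enorm2 r / 2 := by rw [hFsum]; linarith
  have hmem : ∀ n ∈ F, N ≤ n := by
    intro n hn
    rw [hF, Finset.mem_filter, Finset.mem_Ico] at hn
    omega
  have hcone : ∀ n ∈ F, (1 - δ ^ 2 / 32) * enorm2 (x n) ≤ dot2 u (x n) := by
    intro n hn
    rw [hF, Finset.mem_filter] at hn
    have := hn.2
    rw [hu1] at this
    simpa using this
  refine ⟨F, hmem, by nlinarith, ?_⟩
  set v : ℝ × ℝ := ∑ n ∈ F, x n with hv
  have hvle : enorm2 v ≤ Sv := enorm2_sum_le F x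
  have hdotv : δ / 2 * (enorm2 r * Sv) ≤ dot2 r v := by
    have hexp : δ / 2 * (enorm2 r * Sv) = ∑ n ∈ F, δ / 2 * (enorm2 r * enorm2 (x n)) := by
      rw [hSv, Finset.mul_sum, Finset.mul_sum]
    rw [hv, dot2_sum, hexp]
    exact Finset.sum_le_sum fun n hn =>
      angle_bound u r (x n) hu1 hδ0 hδ1 hdot (hcone n hn)
  have hv2 : enorm2 v ^ 2 ≤ Sv ^ 2 := by nlinarith [enorm2_nonneg v]
  rw [enorm2_sub_sq]
  have hfac1 : 0 ≤ (δ * enorm2 r / 2 - Sv) * Sv :=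
    mul_nonneg (by linarith) (by nlinarith)
  have hfac2 : 0 ≤ (Sv - δ * enorm2 r / 4) * (δ * enorm2 r) :=
    mul_nonneg (by linarith) (by positivity)
  nlinarith [hdotv, hv2, hfac1, hfac2]


theorem stmt_7 (x : ℕ → ℝ × ℝ) (hcc : CondConv x)
    (hhalf : ∀ w : ℝ × ℝ, w ≠ 0 → ∃ u : ℝ × ℝ, IsLevy x u ∧ 0 < dot2 w u) :
    ∀ a : ℝ × ℝ, AchievesAbs x a := by
  classical
  intro a
  obtain ⟨⟨s, hconv⟩, -⟩ := hcc
  have hxten : Tendsto x atTop (𝓝 0) := by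
    have h1 : Tendsto (fun n => (∑ m ∈ Finset.range (n+1), x m)
        - ∑ m ∈ Finset.range n, x m) atTop (𝓝 (s - s)) :=
      (hconv.comp (tendsto_add_atTop_nat 1)).sub hconv
    simp only [Finset.sum_range_succ, add_sub_cancel_left, sub_self] at h1
    exact h1
  have hx0 : Tendsto (fun n => enorm2 (x n)) atTop (𝓝 0) := by
    have h2 := (continuous_enorm2.tendsto 0).comp hxten
    rw [enorm2_zero] at h2
    exact h2
  obtain ⟨δ, hδ0, hδ1, hnet⟩ := levy_net x hhalf
  have hstep := step_lemma x hx0 hδ0 hδ1 hnet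
  choose stepF hstep1 hstep2 hstep3 using hstep
  set Φ : ℕ × (ℝ × ℝ) → ℕ × (ℝ × ℝ) := fun p =>
    ((insert p.1 (stepF p.1 p.2)).sup id + 1, p.2 - ∑ n ∈ stepF p.1 p.2, x n) with hΦ
  set st : ℕ → ℕ × (ℝ × ℝ) := fun k => Φ^[k] (0, a) with hst
  have hst0 : st 0 = (0, a) := rfl
  have hstsucc : ∀ k, st (k+1) = Φ (st k) := fun k => Function.iterate_succ_apply' Φ k _
  set Nk : ℕ → ℕ := fun k => (st k).1 with hNk
  set rk : ℕ → ℝ × ℝ := fun k => (st k).2 with hrk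
  set ck : ℕ → Finset ℕ := fun k => stepF (Nk k) (rk k) with hck
  have hr0 : rk 0 = a := rfl
  have hN1 : ∀ k, Nk (k+1) = (insert (Nk k) (ck k)).sup id + 1 := by
    intro k
    show (st (k+1)).1 = _
    rw [hstsucc k]
  have hr1 : ∀ k, rk (k+1) = rk k - ∑ n ∈ ck k, x n := by
    intro k
    show (st (k+1)).2 = _
    rw [hstsucc k]
  have hcklt : ∀ k, ∀ n ∈ ck k, n < Nk (k+1) := by
    intro k n hn
    rw [hN1 k]
    exact Nat.lt_succ_of_le (Finset.le_sup (f := id) (Finset.mem_insert_of_mem hn))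
  have hNlt : ∀ k, Nk k < Nk (k+1) := by
    intro k
    rw [hN1 k]
    exact Nat.lt_succ_of_le (Finset.le_sup (f := id) (Finset.mem_insert_self _ _))
  have hNmono : StrictMono Nk := strictMono_nat_of_lt_succ hNlt
  have hckge : ∀ k, ∀ n ∈ ck k, Nk k ≤ n := fun k => hstep1 (Nk k) (rk k)
  have hckgek : ∀ k, ∀ n ∈ ck k, k ≤ n :=
    fun k n hn => le_trans hNmono.le_apply (hckge k n hn)
  have hdisj : ∀ j k, j < k → Disjoint (ck j) (ck k) := by
    intro j k hjk
    rw [Finset.disjoint_left]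
    intro n hnj hnk
    have h1 : n < Nk (j+1) := hcklt j n hnj
    have h2 : Nk k ≤ n := hckge k n hnk
    have h3 : Nk (j+1) ≤ Nk k := hNmono.monotone (by omega)
    omega
  have hpd : ∀ (t : Finset ℕ), (↑t : Set ℕ).PairwiseDisjoint ck := by
    intro t j _ k _ hjk
    rcases lt_or_gt_of_ne hjk with h | h
    · exact hdisj j k h
    · exact (hdisj k j h).symm
  have hargnn : (0:ℝ) ≤ 1 - δ ^ 2 / 8 := by nlinarith
  set θ : ℝ := Real.sqrt (1 - δ ^ 2 / 8) with hθ
  have hθ0 : 0 ≤ θ := Real.sqrt_nonneg _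
  have hθsq : θ ^ 2 = 1 - δ ^ 2 / 8 := Real.sq_sqrt hargnn
  have hθ1 : θ < 1 := by nlinarith
  have hgeom : ∀ k, enorm2 (rk k) ≤ θ ^ k * enorm2 a := by
    intro k
    induction k with
    | zero => rw [hr0]; simp
    | succ k ih =>
      have hc := hstep3 (Nk k) (rk k)
      rw [← hr1 k] at hc
      have h2 : enorm2 (rk (k+1)) ≤ θ * enorm2 (rk k) := by
        apply sq_le_imp_le _ (enorm2_nonneg _) (mul_nonneg hθ0 (enorm2_nonneg _))
        rw [mul_pow, hθsq]
        exact hc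
      calc enorm2 (rk (k+1)) ≤ θ * enorm2 (rk k) := h2
        _ ≤ θ * (θ ^ k * enorm2 a) := mul_le_mul_of_nonneg_left ih hθ0
        _ = θ ^ (k+1) * enorm2 a := by ring
  set E : Set ℕ := {n | ∃ k, n ∈ ck k} with hE
  have hind : ∀ n, enorm2 (Set.indicator E x n) = if n ∈ E then enorm2 (x n) else 0 := by
    intro n
    rw [Set.indicator_apply]
    split <;> simp [enorm2_zero]
  have hnn : ∀ n, 0 ≤ enorm2 (Set.indicator E x n) := fun n => enorm2_nonneg _
  have hsub : ∀ M : ℕ, ((Finset.range M).filter (fun n => n ∈ E))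
      ⊆ (Finset.range M).biUnion ck := by
    intro M n hn
    rw [Finset.mem_filter, Finset.mem_range] at hn
    obtain ⟨k, hk⟩ := hn.2
    exact Finset.mem_biUnion.2 ⟨k, Finset.mem_range.2 (lt_of_le_of_lt (hckgek k n hk) hn.1), hk⟩
  have hsum_filter : ∀ (t : Finset ℕ), ∑ n ∈ t, enorm2 (Set.indicator E x n)
      = ∑ n ∈ t.filter (fun n => n ∈ E), enorm2 (x n) := by
    intro t
    rw [Finset.sum_filter]
    exact Finset.sum_congr rfl fun n _ => hind n
  have hchunkbd : ∀ k, ∑ n ∈ ck k, enorm2 (x n) ≤ θ ^ k * enorm2 a :=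
    fun k => le_trans (hstep2 (Nk k) (rk k)) (hgeom k)
  have hbound : ∀ M, ∑ n ∈ Finset.range M, enorm2 (Set.indicator E x n)
      ≤ (1 - θ)⁻¹ * enorm2 a := by
    intro M
    rw [hsum_filter]
    calc ∑ n ∈ (Finset.range M).filter (fun n => n ∈ E), enorm2 (x n)
        ≤ ∑ n ∈ (Finset.range M).biUnion ck, enorm2 (x n) :=
          Finset.sum_le_sum_of_subset_of_nonneg (hsub M) (fun i _ _ => enorm2_nonneg _)
      _ = ∑ k ∈ Finset.range M, ∑ n ∈ ck k, enorm2 (x n) := Finset.sum_biUnion (hpd _)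
      _ ≤ ∑ k ∈ Finset.range M, θ ^ k * enorm2 a := Finset.sum_le_sum fun k _ => hchunkbd k
      _ = (∑ k ∈ Finset.range M, θ ^ k) * enorm2 a := by rw [Finset.sum_mul]
      _ ≤ (1 - θ)⁻¹ * enorm2 a :=
          mul_le_mul_of_nonneg_right (sum_le_hasSum _ (fun i _ => pow_nonneg hθ0 i) (hasSum_geometric_of_lt_one hθ0 hθ1)) (enorm2_nonneg a)
  have hgsum : Summable (fun n => enorm2 (Set.indicator E x n)) :=
    summable_of_sum_range_le hnn hbound
  have hvsum : Summable (Set.indicator E x) :=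
    Summable.of_norm_bounded hgsum (fun n => norm_le_enorm2 _)
  have hprefix : ∀ K, ((Finset.range (Nk K)).filter (fun n => n ∈ E))
      = (Finset.range K).biUnion ck := by
    intro K
    apply Finset.ext
    intro n
    constructor
    · intro hn
      rw [Finset.mem_filter, Finset.mem_range] at hn
      obtain ⟨k, hk⟩ := hn.2
      have hkK : k < K := by
        by_contra h
        push_neg at h
        have h1 := hckge k n hk
        have h2 : Nk K ≤ Nk k := hNmono.monotone h
        omega
      exact Finset.mem_biUnion.2 ⟨k, Finset.mem_range.2 hkK, hk⟩
    · intro hn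
      obtain ⟨k, hkK, hk⟩ := Finset.mem_biUnion.1 hn
      rw [Finset.mem_range] at hkK
      rw [Finset.mem_filter, Finset.mem_range]
      refine ⟨?_, ⟨k, hk⟩⟩
      have h1 := hcklt k n hk
      have h2 : Nk (k+1) ≤ Nk K := hNmono.monotone (by omega)
      omega
  have hchunksum : ∀ K, ∑ k ∈ Finset.range K, ∑ n ∈ ck k, x n = a - rk K := by
    intro K
    induction K with
    | zero => rw [hr0]; simp
    | succ K ih =>
      rw [Finset.sum_range_succ, ih, hr1 K]
      abel
  have hpartial : ∀ K, ∑ n ∈ Finset.range (Nk K), Set.indicator E x n = a - rk K := by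
    intro K
    have e1 : ∑ n ∈ Finset.range (Nk K), Set.indicator E x n
        = ∑ n ∈ (Finset.range (Nk K)).filter (fun n => n ∈ E), x n := by
      rw [Finset.sum_filter]
      exact Finset.sum_congr rfl fun n _ => Set.indicator_apply E x n
    rw [e1, hprefix K, Finset.sum_biUnion (hpd _), hchunksum K]
  have hNtop : Tendsto Nk atTop atTop := hNmono.tendsto_atTop
  have hrk0 : Tendsto rk atTop (𝓝 0) := by
    apply squeeze_zero_norm (fun k => le_trans (norm_le_enorm2 _) (hgeom k))
    have h3 := (tendsto_pow_atTop_nhds_zero_of_lt_one hθ0 hθ1).mul_const (enorm2 a)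
    simpa using h3
  have hS : HasSum (Set.indicator E x) (∑' n, Set.indicator E x n) := hvsum.hasSum
  have hten2 : Tendsto (fun K => ∑ n ∈ Finset.range (Nk K), Set.indicator E x n)
      atTop (𝓝 (∑' n, Set.indicator E x n)) := hS.tendsto_sum_nat.comp hNtop
  have hten3 : Tendsto (fun K => a - rk K) atTop (𝓝 a) := by
    have h4 := tendsto_const_nhds (x := a) (f := atTop (α := ℕ)) |>.sub hrk0
    simpa using h4
  have heq : (∑' n, Set.indicator E x n) = a := by
    apply tendsto_nhds_unique _ hten3
    have : (fun K => ∑ n ∈ Finset.range (Nk K), Set.indicator E x n) = fun K => a - rk K :=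
      funext hpartial
    rw [← this]
    exact hten2
  exact ⟨E, hgsum, heq ▸ hS⟩
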